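/- For every positive integer n and every odd integer k ≥ 3 with n ≥ (k−1)/2, the pair (2n, kn) is tame: for every integer c > kn there exists a tame polynomial automorphism of C^3 with multidegree (2n, kn, c). -/

import Mathlib

open MvPolynomial Finset

/-- A polynomial map `ℂ^n → ℂ^n`, given by its coordinate polynomials. -/
abbrev PolyMap (n : ℕ) := Fin n → MvPolynomial (Fin n) ℂ

/-- Composition of polynomial maps: `(compPM F G) = F ∘ G`. -/
noncomputable def compPM {n : ℕ} (F G : PolyMap n) : PolyMap n :=
  fun i => aeval G (F i)

/-- The identity polynomial map. -/
noncomputable def idPM (n : ℕ) : PolyMap n := fun i => X i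

/-- `F` is a polynomial automorphism: it has a polynomial inverse. -/
def IsPolyAut {n : ℕ} (F : PolyMap n) : Prop :=
  ∃ G : PolyMap n, compPM F G = idPM n ∧ compPM G F = idPM n

/-- `F` is elementary: it changes one coordinate `j` by adding a polynomial
not involving the variable `j`. -/
def IsElementaryPM {n : ℕ} (F : PolyMap n) : Prop :=
  ∃ (j : Fin n) (g : MvPolynomial (Fin n) ℂ),
    degreeOf j g = 0 ∧ F j = X j + g ∧ ∀ i, i ≠ j → F i = X i

/-- `F` is a linear (degree ≤ 1) automorphism. -/
def IsLinearPM {n : ℕ} (F : PolyMap n) : Prop :=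
  IsPolyAut F ∧ ∀ i, (F i).totalDegree ≤ 1

/-- `F` is tame: a composition of linear and elementary automorphisms. -/
inductive IsTamePM : {n : ℕ} → PolyMap n → Prop
  | lin {n} (F : PolyMap n) : IsLinearPM F → IsTamePM F
  | elem {n} (F : PolyMap n) : IsElementaryPM F → IsTamePM F
  | comp {n} (F G : PolyMap n) : IsTamePM F → IsTamePM G → IsTamePM (compPM F G)

/-- The multidegree of a polynomial map of `ℂ^3`. -/
noncomputable def mdeg3 (F : PolyMap 3) : ℕ × ℕ × ℕ :=
  ((F 0).totalDegree, (F 1).totalDegree, (F 2).totalDegree)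

-- ===================== general lemmas =====================

lemma compPM_assoc {n : ℕ} (F G H : PolyMap n) :
    compPM (compPM F G) H = compPM F (compPM G H) := by
  funext i
  have h : (aeval H).comp (aeval G) =
      (aeval (fun j => aeval H (G j)) : MvPolynomial (Fin n) ℂ →ₐ[ℂ] MvPolynomial (Fin n) ℂ) := by
    apply MvPolynomial.algHom_ext
    intro j
    simp [aeval_X]
  show aeval H (aeval G (F i)) = _
  have := congrArg (fun (φ : MvPolynomial (Fin n) ℂ →ₐ[ℂ] MvPolynomial (Fin n) ℂ) => φ (F i)) h
  exact this

lemma compPM_id_left {n : ℕ} (F : PolyMap n) : compPM (idPM n) F = F := by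
  funext i; simp [compPM, idPM]

lemma compPM_id_right {n : ℕ} (F : PolyMap n) : compPM F (idPM n) = F := by
  funext i
  show aeval (fun i => X i) (F i) = F i
  exact aeval_X_left_apply (F i)

lemma IsPolyAut.comp {n : ℕ} {F G : PolyMap n} (hF : IsPolyAut F) (hG : IsPolyAut G) :
    IsPolyAut (compPM F G) := by
  obtain ⟨F', hF1, hF2⟩ := hF
  obtain ⟨G', hG1, hG2⟩ := hG
  refine ⟨compPM G' F', ?_, ?_⟩
  · rw [compPM_assoc, ← compPM_assoc G G', hG1, compPM_id_left, hF1]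
  · rw [compPM_assoc, ← compPM_assoc F' F, hF2, compPM_id_left, hG2]

/-- substituting a map fixing all variables except `j` into a polynomial not
involving variable `j` gives back the polynomial -/
lemma aeval_fix {n : ℕ} (f : PolyMap n) (j : Fin n) (q : MvPolynomial (Fin n) ℂ)
    (hq : degreeOf j q = 0) (hf : ∀ i, i ≠ j → f i = X i) : aeval f q = q := by
  conv_lhs => rw [q.as_sum]
  conv_rhs => rw [q.as_sum]
  rw [map_sum]
  apply Finset.sum_congr rfl
  intro d hd
  have hdj : d j = 0 := by
    have h1 := MvPolynomial.degreeOf_eq_sup j q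
    have h2 : d j ≤ degreeOf j q := h1 ▸ Finset.le_sup (f := fun m => m j) hd
    omega
  rw [aeval_monomial, monomial_eq, MvPolynomial.algebraMap_eq]
  congr 1
  rw [Finsupp.prod_fintype _ _ (fun i => pow_zero _),
    Finsupp.prod_fintype _ _ (fun i => pow_zero _)]
  apply Finset.prod_congr rfl
  intro i _
  by_cases hij : i = j
  · rw [hij, hdj, pow_zero, pow_zero]
  · rw [hf i hij]

lemma isPolyAut_of_elementary {n : ℕ} {F : PolyMap n} (h : IsElementaryPM F) :
    IsPolyAut F := by
  classical
  obtain ⟨j, q, hq, hFj, hFi⟩ := h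
  set G : PolyMap n := fun i => if i = j then X j - q else X i with hG
  have hGj : G j = X j - q := by simp [hG]
  have hGi : ∀ i, i ≠ j → G i = X i := fun i hi => by simp [hG, hi]
  refine ⟨G, ?_, ?_⟩
  · funext i
    show aeval G (F i) = X i
    by_cases hij : i = j
    · rw [hij, hFj, map_add, aeval_X, hGj, aeval_fix G j q hq hGi]
      ring
    · rw [hFi i hij, aeval_X, hGi i hij]
  · funext i
    show aeval F (G i) = X i
    by_cases hij : i = j
    · rw [hij, hGj, map_sub, aeval_X, hFj, aeval_fix F j q hq hFi]
      ring
    · rw [hGi i hij, aeval_X, hFi i hij]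

lemma IsTamePM.isPolyAut {n : ℕ} {F : PolyMap n} (h : IsTamePM F) : IsPolyAut F := by
  induction h with
  | lin F h => exact h.1
  | elem F h => exact isPolyAut_of_elementary h
  | comp F G _ _ ihF ihG => exact ihF.comp ihG


noncomputable def acoef (k : ℕ) : ℕ → ℂ
  | 0 => 1
  | s + 1 => ((k.choose (s+1) : ℂ)
      - ∑ i ∈ (Finset.range s).attach, acoef k (i.1+1) * acoef k (s - i.1)) / 2
decreasing_by
  · have := Finset.mem_range.mp i.2; omega
  · omega

lemma acoef_zero (k : ℕ) : acoef k 0 = 1 := by simp [acoef]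

lemma acoef_conv (k s : ℕ) :
    ∑ i ∈ Finset.range (s+1), acoef k i * acoef k (s - i) = (k.choose s : ℂ) := by
  cases s with
  | zero => simp [acoef]
  | succ s =>
    rw [Finset.sum_range_succ'] 
    have h1 : ∀ i ∈ Finset.range (s+1), acoef k (i+1) * acoef k (s + 1 - (i+1))
        = acoef k (i+1) * acoef k (s - i) := by
      intro i _; congr 2; omega
    rw [Finset.sum_congr rfl h1, Finset.sum_range_succ]
    have h2 : ∑ i ∈ (Finset.range s).attach, acoef k (i.1+1) * acoef k (s - i.1)
        = ∑ i ∈ Finset.range s, acoef k (i+1) * acoef k (s - i) :=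
      Finset.sum_attach (Finset.range s) (fun i => acoef k (i+1) * acoef k (s - i))
    have h3 : acoef k (s+1) = ((k.choose (s+1) : ℂ)
        - ∑ i ∈ Finset.range s, acoef k (i+1) * acoef k (s - i)) / 2 := by
      rw [acoef, h2]
    rw [h3, Nat.sub_self, acoef_zero, Nat.sub_zero, h3]
    ring

noncomputable def gpoly (k M : ℕ) : Polynomial ℂ :=
  ∑ i ∈ Finset.range (M+1), Polynomial.C (acoef k i) * Polynomial.X ^ i

lemma gpoly_coeff (k M i : ℕ) :
    (gpoly k M).coeff i = if i ≤ M then acoef k i else 0 := by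
  rw [gpoly, Polynomial.finset_sum_coeff]
  by_cases h : i ≤ M
  · rw [Finset.sum_eq_single i]
    · simp [h]
    · intro b _ hb
      rw [Polynomial.coeff_C_mul, Polynomial.coeff_X_pow, if_neg (fun h => hb h.symm), mul_zero]
    · intro hmem
      exact absurd (Finset.mem_range.mpr (by omega)) hmem
  · rw [Finset.sum_eq_zero, if_neg h]
    intro b hb
    have : b ≠ i := by have := Finset.mem_range.mp hb; omega
    rw [Polynomial.coeff_C_mul, Polynomial.coeff_X_pow, if_neg (fun h => this h.symm), mul_zero]

lemma gpoly_dvd (k M : ℕ) :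
    (Polynomial.X : Polynomial ℂ) ^ (M+1) ∣ (gpoly k M)^2 - (Polynomial.X + 1)^k := by
  rw [Polynomial.X_pow_dvd_iff]
  intro d hd
  have hdM : d ≤ M := by omega
  rw [Polynomial.coeff_sub, Polynomial.coeff_X_add_one_pow, sq, Polynomial.coeff_mul]
  rw [Finset.Nat.sum_antidiagonal_eq_sum_range_succ_mk]
  have : ∀ i ∈ Finset.range (d+1),
      (gpoly k M).coeff i * (gpoly k M).coeff (d - i) = acoef k i * acoef k (d - i) := by
    intro i hi
    have hi' := Finset.mem_range.mp hi
    rw [gpoly_coeff, gpoly_coeff, if_pos (by omega), if_pos (by omega)]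
  rw [Finset.sum_congr rfl this, acoef_conv]
  ring


lemma gpoly_dvd2 (k M : ℕ) :
    (Polynomial.X : Polynomial ℂ) ^ (M+1) ∣
      (∑ i ∈ Finset.range (M+1), Polynomial.C (acoef k i) * Polynomial.X ^ i)^2
        - (Polynomial.X + 1)^k := by
  have h := gpoly_dvd k M
  rwa [gpoly] at h

abbrev P3 := MvPolynomial (Fin 3) ℂ

/-- support condition: no `y`, and weighted degree (with x ↦ 2n, z ↦ 1) equal to `c`. -/
def Zn (n c : ℕ) (P : P3) : Prop :=
  ∀ d ∈ P.support, d 1 = 0 ∧ 2*n*(d 0) + d 2 = c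

lemma Zn.mul {n c c' : ℕ} {P Q : P3} (hP : Zn n c P) (hQ : Zn n c' Q) :
    Zn n (c+c') (P*Q) := by
  intro d hd
  have h := MvPolynomial.support_mul P Q hd
  rw [Finset.mem_add] at h
  obtain ⟨a, ha, b, hb, rfl⟩ := h
  obtain ⟨ha1, ha2⟩ := hP a ha
  obtain ⟨hb1, hb2⟩ := hQ b hb
  refine ⟨by simp [Finsupp.add_apply, ha1, hb1], ?_⟩
  simp only [Finsupp.add_apply]
  rw [mul_add]
  linarith

lemma Zn.pow {n c : ℕ} {P : P3} (hP : Zn n c P) (e : ℕ) : Zn n (e*c) (P^e) := by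
  induction e with
  | zero =>
    intro d hd
    rw [pow_zero] at hd
    have h1 : d = 0 := by
      have := MvPolynomial.mem_support_iff.mp hd
      rw [MvPolynomial.coeff_one] at this
      by_contra hne
      rw [if_neg (fun h => hne h.symm)] at this
      exact this rfl
    subst h1
    simp
  | succ e ih =>
    rw [pow_succ]
    have := ih.mul hP
    have he : e*c + c = (e+1)*c := by ring
    rwa [he] at this

lemma Zn.sub {n c : ℕ} {P Q : P3} (hP : Zn n c P) (hQ : Zn n c Q) : Zn n c (P - Q) := by
  intro d hd
  have h := MvPolynomial.mem_support_iff.mp hd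
  rw [MvPolynomial.coeff_sub] at h
  rcases eq_or_ne (MvPolynomial.coeff d P) 0 with h1 | h1
  · exact hQ d (MvPolynomial.mem_support_iff.mpr (by intro h2; rw [h1, h2] at h; simp at h))
  · exact hP d (MvPolynomial.mem_support_iff.mpr h1)

lemma Zn.congr {n c c' : ℕ} {P : P3} (hP : Zn n c P) (h : c = c') : Zn n c' P := h ▸ hP

-- ============ the polynomials ============

noncomputable def f1 (n : ℕ) : P3 := X 0 + X 2 ^ (2*n)

noncomputable def gM (n m : ℕ) : P3 :=
  ∑ i ∈ Finset.range (m+1),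
    monomial (Finsupp.single 0 i + Finsupp.single 2 ((2*m+1)*n - 2*n*i)) (acoef (2*m+1) i)

noncomputable def Qp (n m : ℕ) : P3 := (gM n m)^2 - (f1 n)^(2*m+1)

noncomputable def f2 (n m t : ℕ) : P3 := X 1 + (gM n m + X 2 ^ t)

noncomputable def Wp (n m t : ℕ) : P3 := (f2 n m t)^2 - (f1 n)^(2*m+1)

noncomputable def f3 (n m p t : ℕ) : P3 := X 2 + (f1 n)^p * Wp n m t

lemma Zn_f1 (n : ℕ) : Zn n (2*n) (f1 n) := by
  intro d hd
  have h := MvPolynomial.support_add hd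
  rw [Finset.mem_union] at h
  rcases h with h | h
  · rw [show (X 0 : P3) = X 0 ^ 1 from (pow_one _).symm, MvPolynomial.support_X_pow,
      Finset.mem_singleton] at h
    subst h
    constructor <;> simp [Finsupp.single_apply]
  · rw [MvPolynomial.support_X_pow, Finset.mem_singleton] at h
    subst h
    constructor <;> simp [Finsupp.single_apply]

lemma Zn_gM {n m : ℕ} (hn : 1 ≤ n) : Zn n ((2*m+1)*n) (gM n m) := by
  intro d hd
  have h := MvPolynomial.support_sum hd
  rw [Finset.mem_biUnion] at h
  obtain ⟨i, hi, hdi⟩ := h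
  have hi' : i ≤ m := by have := Finset.mem_range.mp hi; omega
  rw [MvPolynomial.support_monomial] at hdi
  by_cases hz : acoef (2*m+1) i = 0
  · rw [if_pos hz] at hdi; exact absurd hdi (Finset.notMem_empty d)
  · rw [if_neg hz, Finset.mem_singleton] at hdi
    subst hdi
    have hle : 2*n*i ≤ (2*m+1)*n := by nlinarith
    refine ⟨by simp [Finsupp.single_apply], ?_⟩
    have e0 : ((Finsupp.single (0:Fin 3) i + Finsupp.single 2 ((2*m+1)*n - 2*n*i)) : Fin 3 →₀ ℕ) 0 = i := by
      simp [Finsupp.single_apply]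
    have e2 : ((Finsupp.single (0:Fin 3) i + Finsupp.single 2 ((2*m+1)*n - 2*n*i)) : Fin 3 →₀ ℕ) 2 = (2*m+1)*n - 2*n*i := by
      simp [Finsupp.single_apply]
    rw [e0, e2]
    exact Nat.add_sub_cancel' hle

lemma Zn_Qp {n m : ℕ} (hn : 1 ≤ n) : Zn n (2*n*(2*m+1)) (Qp n m) := by
  have h1 : Zn n (2*((2*m+1)*n)) ((gM n m)^2) := (Zn_gM hn).pow 2
  have h2 : Zn n ((2*m+1)*(2*n)) ((f1 n)^(2*m+1)) := (Zn_f1 n).pow (2*m+1)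
  exact (h1.congr (by ring)).sub (h2.congr (by ring))

-- ============ transfer to one variable ============

noncomputable def phi : P3 →ₐ[ℂ] Polynomial ℂ :=
  aeval (fun i => if i = 0 then Polynomial.X else 1)

lemma phi_monomial (d : Fin 3 →₀ ℕ) (c : ℂ) :
    phi (monomial d c) = Polynomial.C c * Polynomial.X ^ (d 0) := by
  rw [phi, aeval_monomial]
  rw [Finsupp.prod_fintype _ _ (fun i => pow_zero _), Fin.prod_univ_three]
  rw [if_pos rfl, if_neg (by decide : ¬(1:Fin 3) = 0), if_neg (by decide : ¬(2:Fin 3) = 0),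
    one_pow, one_pow, mul_one, mul_one, Polynomial.algebraMap_eq]

lemma phi_gM (n m : ℕ) :
    phi (gM n m) = ∑ i ∈ Finset.range (m+1), Polynomial.C (acoef (2*m+1) i) * Polynomial.X ^ i := by
  rw [gM, map_sum]
  apply Finset.sum_congr rfl
  intro i _
  rw [phi_monomial]
  congr 1
  simp [Finsupp.single_apply]

lemma phi_f1 (n : ℕ) : phi (f1 n) = Polynomial.X + 1 := by
  rw [f1, map_add, map_pow, phi, aeval_X, aeval_X]
  rw [if_pos rfl, if_neg (by decide : ¬(2:Fin 3) = 0), one_pow]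

lemma phi_Qp (n m : ℕ) :
    phi (Qp n m) =
      (∑ i ∈ Finset.range (m+1), Polynomial.C (acoef (2*m+1) i) * Polynomial.X ^ i)^2
        - (Polynomial.X + 1)^(2*m+1) := by
  rw [Qp, map_sub, map_pow, map_pow, phi_gM, phi_f1]

/-- every monomial of `Qp` has `x`-exponent at least `m+1` -/
lemma Qp_support_lb {n m : ℕ} (hn : 1 ≤ n) :
    ∀ d ∈ (Qp n m).support, m + 1 ≤ d 0 := by
  intro d hd
  by_contra hlt
  push_neg at hlt
  -- coefficient of X^(d 0) in phi (Qp n m) equals coeff d (Qp n m)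
  have key : (phi (Qp n m)).coeff (d 0) = MvPolynomial.coeff d (Qp n m) := by
    conv_lhs => rw [(Qp n m).as_sum]
    rw [map_sum]
    have h1 : ∀ d' ∈ (Qp n m).support,
        phi (monomial d' (MvPolynomial.coeff d' (Qp n m)))
          = Polynomial.C (MvPolynomial.coeff d' (Qp n m)) * Polynomial.X ^ (d' 0) :=
      fun d' _ => phi_monomial _ _
    rw [Finset.sum_congr rfl h1, Polynomial.finset_sum_coeff]
    rw [Finset.sum_eq_single d]
    · rw [Polynomial.coeff_C_mul, Polynomial.coeff_X_pow, if_pos rfl, mul_one]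
    · intro d' hd' hne
      rw [Polynomial.coeff_C_mul, Polynomial.coeff_X_pow]
      rcases eq_or_ne (d 0) (d' 0) with he | he
      · -- injectivity: d' = d, contradiction
        exfalso
        apply hne
        obtain ⟨e1, e2⟩ := Zn_Qp hn d' hd'
        obtain ⟨e3, e4⟩ := Zn_Qp hn d hd
        ext i
        fin_cases i
        · show d' 0 = d 0
          exact he.symm
        · show d' 1 = d 1; rw [e1, e3]
        · show d' 2 = d 2; rw [he] at e4; omega
      · rw [if_neg he, mul_zero]
    · intro h; exact absurd hd h
  have hdvd := gpoly_dvd2 (2*m+1) m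
  rw [← phi_Qp n m] at hdvd
  have h0 := Polynomial.X_pow_dvd_iff.mp hdvd (d 0) (by omega)
  rw [key] at h0
  exact (MvPolynomial.mem_support_iff.mp hd) h0



-- ============ degree bounds ============

lemma dsum_eq (d : Fin 3 →₀ ℕ) : (d.sum fun _ e => e) = d 0 + d 1 + d 2 := by
  rw [Finsupp.sum_fintype _ _ (fun i => rfl), Fin.sum_univ_three]

lemma Qp_totalDegree {n m : ℕ} (hn : 1 ≤ n) (hm : 1 ≤ m) (hnm : m ≤ n) :
    (Qp n m).totalDegree ≤ (2*m+1)*n + 1 := by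
  apply Finset.sup_le
  intro d hd
  obtain ⟨h1, h2⟩ := Zn_Qp hn d hd
  have h3 := Qp_support_lb hn d hd
  rw [dsum_eq, h1]
  have e2 : (2*(n:ℤ)*(d 0)) + d 2 = 2*n*(2*m+1) := by exact_mod_cast h2
  have e3 : (m:ℤ) + 1 ≤ (d 0 : ℤ) := by exact_mod_cast h3
  have e4 : (m:ℤ) ≤ n := by exact_mod_cast hnm
  have e5 : (1:ℤ) ≤ m := by exact_mod_cast hm
  have hle : (d 0 : ℤ) + 0 + d 2 ≤ (2*m+1)*n + 1 := by
    nlinarith [mul_nonneg (by linarith : (0:ℤ) ≤ 2*(n:ℤ)-1)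
      (by linarith : (0:ℤ) ≤ (d 0 : ℤ) - ((m:ℤ)+1))]
  exact_mod_cast hle

lemma gM_totalDegree {n m : ℕ} (hn : 1 ≤ n) : (gM n m).totalDegree ≤ (2*m+1)*n := by
  rw [gM]
  apply le_trans (MvPolynomial.totalDegree_finset_sum _ _)
  apply Finset.sup_le
  intro i hi
  have hi' : i ≤ m := by have := Finset.mem_range.mp hi; omega
  by_cases hz : acoef (2*m+1) i = 0
  · rw [hz, MvPolynomial.monomial_zero]
    simp
  · rw [MvPolynomial.totalDegree_monomial _ hz, dsum_eq]
    have e0 : ((Finsupp.single (0:Fin 3) i + Finsupp.single 2 ((2*m+1)*n - 2*n*i)) : Fin 3 →₀ ℕ) 0 = i := by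
      simp [Finsupp.single_apply]
    have e1 : ((Finsupp.single (0:Fin 3) i + Finsupp.single 2 ((2*m+1)*n - 2*n*i)) : Fin 3 →₀ ℕ) 1 = 0 := by
      simp [Finsupp.single_apply]
    have e2 : ((Finsupp.single (0:Fin 3) i + Finsupp.single 2 ((2*m+1)*n - 2*n*i)) : Fin 3 →₀ ℕ) 2 = (2*m+1)*n - 2*n*i := by
      simp [Finsupp.single_apply]
    rw [e0, e1, e2, Nat.add_zero]
    have hle : i ≤ 2*n*i := Nat.le_mul_of_pos_left i (by omega)
    have h2 : 2*n*i ≤ (2*m+1)*n := by nlinarith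
    calc i + ((2*m+1)*n - 2*n*i) ≤ 2*n*i + ((2*m+1)*n - 2*n*i) :=
          Nat.add_le_add_right hle _
      _ = (2*m+1)*n := Nat.add_sub_cancel' h2

-- coefficient extraction helpers

lemma coeff_gM_top {n m : ℕ} : MvPolynomial.coeff (Finsupp.single 2 ((2*m+1)*n)) (gM n m) = 1 := by
  rw [gM, MvPolynomial.coeff_sum]
  rw [Finset.sum_eq_single 0]
  · have he : (Finsupp.single (0:Fin 3) 0 + Finsupp.single 2 ((2*m+1)*n - 2*n*0) : Fin 3 →₀ ℕ)
        = Finsupp.single 2 ((2*m+1)*n) := by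
      simp
    rw [MvPolynomial.coeff_monomial, if_pos he, acoef_zero]
  · intro i hi hne
    rw [MvPolynomial.coeff_monomial, if_neg]
    exact fun h => hne (by simpa [Finsupp.single_apply] using DFunLike.congr_fun h 0)
  · intro h
    exact absurd (Finset.mem_range.mpr (by omega)) h



lemma single2_ne {a b : ℕ} (h : a ≠ b) :
    (Finsupp.single (2:Fin 3) a : Fin 3 →₀ ℕ) ≠ Finsupp.single 2 b := by
  intro he
  exact h (by simpa [Finsupp.single_apply] using DFunLike.congr_fun he 2)

lemma coeff_f1_top {n : ℕ} (hn : 1 ≤ n) :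
    MvPolynomial.coeff (Finsupp.single 2 (2*n)) (f1 n) = 1 := by
  have h1 : ¬ (Finsupp.single (0:Fin 3) 1 : Fin 3 →₀ ℕ) = Finsupp.single 2 (2*n) := by
    intro h
    have h2 := DFunLike.congr_fun h 0
    simp [Finsupp.single_apply] at h2
  rw [f1, MvPolynomial.coeff_add, MvPolynomial.X_pow_eq_monomial,
    MvPolynomial.coeff_monomial, if_pos rfl,
    show (X (0:Fin 3) : P3) = X 0 ^ 1 from (pow_one _).symm, MvPolynomial.X_pow_eq_monomial,
    MvPolynomial.coeff_monomial, if_neg h1, zero_add]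

/-- multiplying: the coefficient of the top pure-`z` monomial -/
lemma coeff_mul_topz {n cP cQ : ℕ} {P Q : P3} (hP : Zn n cP P) :
    MvPolynomial.coeff (Finsupp.single 2 (cP + cQ)) (P * Q)
      = MvPolynomial.coeff (Finsupp.single 2 cP) P * MvPolynomial.coeff (Finsupp.single 2 cQ) Q := by
  classical
  rw [MvPolynomial.coeff_mul]
  rw [Finset.sum_eq_single ((Finsupp.single (2:Fin 3) cP : Fin 3 →₀ ℕ), (Finsupp.single (2:Fin 3) cQ : Fin 3 →₀ ℕ))]
  · intro b hb hne
    rw [Finset.HasAntidiagonal.mem_antidiagonal] at hb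
    rcases eq_or_ne (MvPolynomial.coeff b.1 P) 0 with h1 | h1
    · rw [h1, zero_mul]
    · exfalso
      obtain ⟨e1, e2⟩ := hP b.1 (MvPolynomial.mem_support_iff.mpr h1)
      have c0 := DFunLike.congr_fun hb 0
      have c1 := DFunLike.congr_fun hb 1
      have c2 := DFunLike.congr_fun hb 2
      simp [Finsupp.add_apply, Finsupp.single_apply] at c0 c1 c2
      -- c0 : b.1 0 + b.2 0 = 0, c1 : b.1 1 + b.2 1 = 0, c2 : b.1 2 + b.2 2 = cP + cQ
      have hb10 : b.1 0 = 0 := by omega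
      have hb12 : b.1 2 = cP := by
        rw [hb10] at e2; omega
      apply hne
      have hbfst : b.1 = Finsupp.single 2 cP := by
        ext i; fin_cases i
        · show b.1 0 = (Finsupp.single (2:Fin 3) cP : Fin 3 →₀ ℕ) 0
          simp [Finsupp.single_apply, hb10]
        · show b.1 1 = (Finsupp.single (2:Fin 3) cP : Fin 3 →₀ ℕ) 1
          simp [Finsupp.single_apply, e1]
        · show b.1 2 = (Finsupp.single (2:Fin 3) cP : Fin 3 →₀ ℕ) 2
          simp [Finsupp.single_apply, hb12]
      have hbsnd : b.2 = Finsupp.single 2 cQ := by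
        ext i; fin_cases i
        · show b.2 0 = (Finsupp.single (2:Fin 3) cQ : Fin 3 →₀ ℕ) 0
          simp [Finsupp.single_apply]; omega
        · show b.2 1 = (Finsupp.single (2:Fin 3) cQ : Fin 3 →₀ ℕ) 1
          simp [Finsupp.single_apply]; omega
        · show b.2 2 = (Finsupp.single (2:Fin 3) cQ : Fin 3 →₀ ℕ) 2
          simp [Finsupp.single_apply]; omega
      exact Prod.ext hbfst hbsnd
  · intro h
    exfalso
    apply h
    rw [Finset.HasAntidiagonal.mem_antidiagonal, ← Finsupp.single_add]

lemma coeff_f1pow_top {n : ℕ} (hn : 1 ≤ n) (p : ℕ) :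
    MvPolynomial.coeff (Finsupp.single 2 (2*n*p)) ((f1 n)^p) = 1 := by
  induction p with
  | zero =>
    rw [pow_zero, Nat.mul_zero, MvPolynomial.coeff_one, if_pos]
    exact (Finsupp.single_zero 2).symm
  | succ p ih =>
    rw [pow_succ, show 2*n*(p+1) = 2*n*p + 2*n by ring,
      coeff_mul_topz (((Zn_f1 n).pow p).congr (by ring)), ih, coeff_f1_top hn, one_mul]



lemma C2_eq : (MvPolynomial.C (2:ℂ) : P3) = 2 := by
  rw [show (2:ℂ) = 1 + 1 by norm_num, map_add, map_one]
  norm_num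

lemma Wp_eq (n m t : ℕ) : Wp n m t
    = X 1^2 + MvPolynomial.C (2:ℂ) * (X 1 * (gM n m + X 2^t))
      + MvPolynomial.C (2:ℂ) * (gM n m * X 2^t)
      + X 2^t * X 2^t + Qp n m := by
  rw [Wp, f2, Qp, C2_eq]
  ring

lemma coeff_Wp_top {n m t : ℕ} (hn : 1 ≤ n) (hm : 1 ≤ m) (htK : t < (2*m+1)*n) :
    MvPolynomial.coeff (Finsupp.single 2 ((2*m+1)*n + t)) (Wp n m t) = 2 := by
  rw [Wp_eq, MvPolynomial.coeff_add, MvPolynomial.coeff_add, MvPolynomial.coeff_add,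
    MvPolynomial.coeff_add]
  have h1 : MvPolynomial.coeff (Finsupp.single 2 ((2*m+1)*n + t)) (X 1^2 : P3) = 0 := by
    rw [MvPolynomial.X_pow_eq_monomial, MvPolynomial.coeff_monomial, if_neg]
    intro h
    have h2 := DFunLike.congr_fun h 1
    simp [Finsupp.single_apply] at h2
  have h2 : MvPolynomial.coeff (Finsupp.single 2 ((2*m+1)*n + t))
      (MvPolynomial.C (2:ℂ) * (X 1 * (gM n m + X 2^t))) = 0 := by
    rw [MvPolynomial.coeff_C_mul,
      show (X (1:Fin 3) : P3) = X 1 ^ 1 from (pow_one _).symm, MvPolynomial.X_pow_eq_monomial,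
      MvPolynomial.coeff_monomial_mul', if_neg, mul_zero]
    rw [Finsupp.single_le_iff]
    simp [Finsupp.single_apply]
  have h3 : MvPolynomial.coeff (Finsupp.single 2 ((2*m+1)*n + t))
      (MvPolynomial.C (2:ℂ) * (gM n m * X 2^t)) = 2 := by
    rw [MvPolynomial.coeff_C_mul, MvPolynomial.X_pow_eq_monomial, Finsupp.single_add,
      MvPolynomial.coeff_mul_monomial, coeff_gM_top, one_mul, mul_one]
  have h4 : MvPolynomial.coeff (Finsupp.single 2 ((2*m+1)*n + t)) (X 2^t * X 2^t : P3) = 0 := by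
    rw [← pow_add, MvPolynomial.X_pow_eq_monomial, MvPolynomial.coeff_monomial,
      if_neg (single2_ne (by omega))]
  have h5 : MvPolynomial.coeff (Finsupp.single 2 ((2*m+1)*n + t)) (Qp n m) = 0 := by
    by_contra h
    have := Qp_support_lb hn (Finsupp.single 2 ((2*m+1)*n + t))
      (MvPolynomial.mem_support_iff.mpr h)
    simp [Finsupp.single_apply] at this
  rw [h1, h2, h3, h4, h5]
  norm_num

lemma sum_single2 (e : ℕ) : ((Finsupp.single (2:Fin 3) e : Fin 3 →₀ ℕ).sum fun _ x => x) = e :=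
  Finsupp.sum_single_index rfl

lemma tdeg_f1 {n : ℕ} (hn : 1 ≤ n) : (f1 n).totalDegree = 2*n := by
  apply le_antisymm
  · apply le_trans (MvPolynomial.totalDegree_add _ _)
    rw [MvPolynomial.totalDegree_X, MvPolynomial.totalDegree_X_pow]
    omega
  · have h := MvPolynomial.le_totalDegree (p := f1 n) (s := Finsupp.single 2 (2*n))
      (MvPolynomial.mem_support_iff.mpr (by rw [coeff_f1_top hn]; norm_num))
    rwa [sum_single2] at h

lemma tdeg_f2 {n m t : ℕ} (hn : 1 ≤ n) (hm : 1 ≤ m) (htK : t < (2*m+1)*n) :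
    (f2 n m t).totalDegree = (2*m+1)*n := by
  apply le_antisymm
  · rw [f2]
    apply le_trans (MvPolynomial.totalDegree_add _ _)
    apply max_le
    · rw [MvPolynomial.totalDegree_X]
      nlinarith
    · apply le_trans (MvPolynomial.totalDegree_add _ _)
      apply max_le (gM_totalDegree hn)
      rw [MvPolynomial.totalDegree_X_pow]
      omega
  · have hc : MvPolynomial.coeff (Finsupp.single 2 ((2*m+1)*n)) (f2 n m t) = 1 := by
      rw [f2, MvPolynomial.coeff_add, MvPolynomial.coeff_add,
        show (X (1:Fin 3) : P3) = X 1 ^ 1 from (pow_one _).symm, MvPolynomial.X_pow_eq_monomial,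
        MvPolynomial.coeff_monomial, if_neg, coeff_gM_top,
        MvPolynomial.X_pow_eq_monomial, MvPolynomial.coeff_monomial,
        if_neg (single2_ne (by omega))]
      · norm_num
      · intro h
        have h2 := DFunLike.congr_fun h 1
        simp [Finsupp.single_apply] at h2
    have h := MvPolynomial.le_totalDegree (p := f2 n m t) (s := Finsupp.single 2 ((2*m+1)*n))
      (MvPolynomial.mem_support_iff.mpr (by rw [hc]; norm_num))
    rwa [sum_single2] at h

lemma tdeg_Wp {n m t : ℕ} (hn : 1 ≤ n) (hm : 1 ≤ m) (hnm : m ≤ n) (ht1 : 1 ≤ t)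
    (htK : t < (2*m+1)*n) :
    (Wp n m t).totalDegree ≤ (2*m+1)*n + t := by
  have hK3 : 3 ≤ (2*m+1)*n := le_trans (by omega) (Nat.mul_le_mul (by omega : 3 ≤ 2*m+1) hn)
  rw [Wp_eq]
  apply le_trans (MvPolynomial.totalDegree_add _ _)
  apply max_le
  · apply le_trans (MvPolynomial.totalDegree_add _ _)
    apply max_le
    · apply le_trans (MvPolynomial.totalDegree_add _ _)
      apply max_le
      · apply le_trans (MvPolynomial.totalDegree_add _ _)
        apply max_le
        · rw [MvPolynomial.totalDegree_X_pow]
          omega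
        · apply le_trans (MvPolynomial.totalDegree_mul _ _)
          rw [MvPolynomial.totalDegree_C, zero_add]
          apply le_trans (MvPolynomial.totalDegree_mul _ _)
          rw [MvPolynomial.totalDegree_X]
          have : (gM n m + X 2^t : P3).totalDegree ≤ (2*m+1)*n := by
            apply le_trans (MvPolynomial.totalDegree_add _ _)
            apply max_le (gM_totalDegree hn)
            rw [MvPolynomial.totalDegree_X_pow]
            omega
          omega
      · apply le_trans (MvPolynomial.totalDegree_mul _ _)
        rw [MvPolynomial.totalDegree_C, zero_add]
        apply le_trans (MvPolynomial.totalDegree_mul _ _)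
        rw [MvPolynomial.totalDegree_X_pow]
        have := gM_totalDegree (m := m) hn
        omega
    · apply le_trans (MvPolynomial.totalDegree_mul _ _)
      rw [MvPolynomial.totalDegree_X_pow]
      omega
  · apply le_trans (Qp_totalDegree hn hm hnm)
    omega

lemma tdeg_f3 {n m p t : ℕ} (hn : 1 ≤ n) (hm : 1 ≤ m) (hnm : m ≤ n) (ht1 : 1 ≤ t)
    (htK : t < (2*m+1)*n) :
    (f3 n m p t).totalDegree = 2*n*p + ((2*m+1)*n + t) := by
  have hK3 : 3 ≤ (2*m+1)*n := le_trans (by omega) (Nat.mul_le_mul (by omega : 3 ≤ 2*m+1) hn)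
  apply le_antisymm
  · rw [f3]
    apply le_trans (MvPolynomial.totalDegree_add _ _)
    apply max_le
    · rw [MvPolynomial.totalDegree_X]
      omega
    · apply le_trans (MvPolynomial.totalDegree_mul _ _)
      have h1 : ((f1 n)^p).totalDegree ≤ p * (2*n) := by
        apply le_trans (MvPolynomial.totalDegree_pow _ _)
        rw [tdeg_f1 hn]
      have h2 := tdeg_Wp hn hm hnm ht1 htK
      have : p * (2*n) = 2*n*p := by ring
      omega
  · have hc : MvPolynomial.coeff (Finsupp.single 2 (2*n*p + ((2*m+1)*n + t))) (f3 n m p t) = 2 := by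
      rw [f3, MvPolynomial.coeff_add,
        show (X (2:Fin 3) : P3) = X 2 ^ 1 from (pow_one _).symm, MvPolynomial.X_pow_eq_monomial,
        MvPolynomial.coeff_monomial, if_neg (single2_ne (by omega)), zero_add,
        coeff_mul_topz (((Zn_f1 n).pow p).congr (by ring)), coeff_f1pow_top hn,
        coeff_Wp_top hn hm htK, one_mul]
    have h := MvPolynomial.le_totalDegree (p := f3 n m p t)
      (s := Finsupp.single 2 (2*n*p + ((2*m+1)*n + t)))
      (MvPolynomial.mem_support_iff.mpr (by rw [hc]; norm_num))
    rwa [sum_single2] at h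



-- ===================== assembly =====================

lemma degreeOf_zero_of_support {j : Fin 3} {P : P3} (h : ∀ d ∈ P.support, d j = 0) :
    degreeOf j P = 0 := by
  rw [MvPolynomial.degreeOf_eq_sup]
  apply Nat.eq_zero_of_le_zero
  apply Finset.sup_le
  intro d hd
  exact Nat.le_of_eq (h d hd)

lemma support_sub_subset (P Q : P3) : (P - Q).support ⊆ P.support ∪ Q.support := by
  intro d hd
  have h := MvPolynomial.mem_support_iff.mp hd
  rw [MvPolynomial.coeff_sub] at h
  rw [Finset.mem_union]
  rcases eq_or_ne (MvPolynomial.coeff d P) 0 with h1 | h1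
  · right
    apply MvPolynomial.mem_support_iff.mpr
    intro h2
    rw [h1, h2] at h
    simp at h
  · exact Or.inl (MvPolynomial.mem_support_iff.mpr h1)

lemma dA_deg {n m t : ℕ} (hn : 1 ≤ n) : degreeOf 1 (gM n m + X 2 ^ t : P3) = 0 := by
  apply degreeOf_zero_of_support
  intro d hd
  have h := MvPolynomial.support_add hd
  rw [Finset.mem_union] at h
  rcases h with h | h
  · exact (Zn_gM hn d h).1
  · rw [MvPolynomial.support_X_pow, Finset.mem_singleton] at h
    subst h
    simp [Finsupp.single_apply]

lemma dB_deg {n : ℕ} : degreeOf 0 (X 2 ^ (2*n) : P3) = 0 := by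
  apply degreeOf_zero_of_support
  intro d hd
  rw [MvPolynomial.support_X_pow, Finset.mem_singleton] at hd
  subst hd
  simp [Finsupp.single_apply]

lemma dE_deg {m p : ℕ} : degreeOf 2 (X 0^p * (X 1^2 - X 0^(2*m+1)) : P3) = 0 := by
  apply degreeOf_zero_of_support
  intro d hd
  have h := MvPolynomial.support_mul _ _ hd
  rw [Finset.mem_add] at h
  obtain ⟨u, hu, v, hv, rfl⟩ := h
  have hu2 : u 2 = 0 := by
    rw [MvPolynomial.support_X_pow, Finset.mem_singleton] at hu
    subst hu
    simp [Finsupp.single_apply]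
  have hv2 : v 2 = 0 := by
    have h2 := support_sub_subset _ _ hv
    rw [Finset.mem_union] at h2
    rcases h2 with h2 | h2 <;>
      · rw [MvPolynomial.support_X_pow, Finset.mem_singleton] at h2
        subst h2
        simp [Finsupp.single_apply]
  simp [Finsupp.add_apply, hu2, hv2]

lemma construction (n m p t : ℕ) (hn : 1 ≤ n) (hm : 1 ≤ m) (hnm : m ≤ n)
    (ht1 : 1 ≤ t) (ht2 : t ≤ 2*n) :
    ∃ F : PolyMap 3, IsTamePM F ∧
      mdeg3 F = (2*n, (2*m+1)*n, 2*n*p + ((2*m+1)*n + t)) := by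
  classical
  have htK : t < (2*m+1)*n := by nlinarith
  set A : PolyMap 3 := fun i => if i = 1 then X 1 + (gM n m + X 2 ^ t) else X i with hA
  set B : PolyMap 3 := fun i => if i = 0 then X 0 + X 2 ^ (2*n) else X i with hB
  set E : PolyMap 3 := fun i => if i = 2 then X 2 + X 0^p * (X 1^2 - X 0^(2*m+1)) else X i with hE
  have hA0 : A 0 = X 0 := by simp [hA]
  have hA1 : A 1 = X 1 + (gM n m + X 2 ^ t) := by simp [hA]
  have hA2 : A 2 = X 2 := by simp [hA]
  have hB0 : B 0 = X 0 + X 2 ^ (2*n) := by simp [hB]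
  have hB1 : B 1 = X 1 := by simp [hB]
  have hB2 : B 2 = X 2 := by simp [hB]
  have hE0 : E 0 = X 0 := by simp [hE]
  have hE1 : E 1 = X 1 := by simp [hE]
  have hE2 : E 2 = X 2 + X 0^p * (X 1^2 - X 0^(2*m+1)) := by simp [hE]
  have hG0 : compPM B A 0 = f1 n := by
    show aeval A (B 0) = f1 n
    rw [hB0, map_add, map_pow, aeval_X, aeval_X, hA0, hA2, f1]
  have hG1 : compPM B A 1 = f2 n m t := by
    show aeval A (B 1) = f2 n m t
    rw [hB1, aeval_X, hA1, f2]
  have hG2 : compPM B A 2 = X 2 := by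
    show aeval A (B 2) = X 2
    rw [hB2, aeval_X, hA2]
  have hF0 : compPM E (compPM B A) 0 = f1 n := by
    show aeval (compPM B A) (E 0) = f1 n
    rw [hE0, aeval_X, hG0]
  have hF1 : compPM E (compPM B A) 1 = f2 n m t := by
    show aeval (compPM B A) (E 1) = f2 n m t
    rw [hE1, aeval_X, hG1]
  have hF2 : compPM E (compPM B A) 2 = f3 n m p t := by
    show aeval (compPM B A) (E 2) = f3 n m p t
    rw [hE2, map_add, map_mul, map_pow, map_sub, map_pow, map_pow, aeval_X, aeval_X, aeval_X,
      hG0, hG1, hG2, f3, Wp]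
  refine ⟨compPM E (compPM B A), ?_, ?_⟩
  · apply IsTamePM.comp
    · apply IsTamePM.elem
      refine ⟨2, X 0^p * (X 1^2 - X 0^(2*m+1)), dE_deg, by simp [hE], fun i hi => by simp [hE, hi]⟩
    · apply IsTamePM.comp
      · apply IsTamePM.elem
        refine ⟨0, X 2^(2*n), dB_deg, by simp [hB], fun i hi => by simp [hB, hi]⟩
      · apply IsTamePM.elem
        refine ⟨1, gM n m + X 2^t, dA_deg hn, by simp [hA], fun i hi => by simp [hA, hi]⟩
  · rw [mdeg3, hF0, hF1, hF2, tdeg_f1 hn, tdeg_f2 hn hm htK, tdeg_f3 hn hm hnm ht1 htK]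


theorem stmt14 (n k : ℕ) (hn : 0 < n) (hk : 3 ≤ k) (hko : Odd k)
    (hnk : k - 1 ≤ 2 * n) :
    ∀ c : ℕ, k * n < c →
      ∃ F : PolyMap 3, IsTamePM F ∧ IsPolyAut F ∧ mdeg3 F = (2 * n, k * n, c) := by
  obtain ⟨m, hk2⟩ := hko
  subst hk2
  have hm : 1 ≤ m := by omega
  have hnm : m ≤ n := by omega
  intro c hc
  set r := (c - (2*m+1)*n - 1) % (2*n) with hr
  set pp := (c - (2*m+1)*n - 1) / (2*n) with hpp
  have h2n : 0 < 2*n := by omega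
  have hmod : 2*n * pp + r = c - (2*m+1)*n - 1 := Nat.div_add_mod _ _
  have hrlt : r < 2*n := Nat.mod_lt _ h2n
  have hle : (2*m+1)*n + 1 ≤ c := by omega
  have hcc : c = 2*n*pp + ((2*m+1)*n + (r+1)) := by
    rw [Nat.sub_sub] at hmod
    have h2 := (Nat.sub_eq_iff_eq_add hle).mp hmod.symm
    linarith
  obtain ⟨F, hTame, hmdeg⟩ := construction n m pp (r+1) hn hm hnm (by omega) (by omega)
  refine ⟨F, hTame, hTame.isPolyAut, ?_⟩
  rw [hmdeg, ← hcc]
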